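/- The Petersen graph with one vertex deleted (P*) is not 3-edge-colorable: χ'(P*) = 4. -/

import Mathlib

/-- The chromatic index of `H`, i.e. the chromatic number of its line graph. -/
noncomputable def SimpleGraph.chromaticIndex {V : Type*} (H : SimpleGraph V) : ℕ∞ :=
  H.lineGraph.chromaticNumber

/-- The Petersen graph: vertices are the 2-element subsets of a 5-element set, adjacent
iff disjoint. -/
def petersen : SimpleGraph {s : Finset (Fin 5) // s.card = 2} where
  Adj a b := a ≠ b ∧ Disjoint (a : Finset (Fin 5)) (b : Finset (Fin 5))
  symm := ⟨fun a b h => ⟨h.1.symm, h.2.symm⟩⟩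
  loopless := ⟨fun a h => h.1 rfl⟩

instance : DecidableRel petersen.Adj := fun a b =>
  inferInstanceAs (Decidable (a ≠ b ∧ Disjoint (a : Finset (Fin 5)) (b : Finset (Fin 5))))

abbrev Vtx : Type := {s : Finset (Fin 5) // s.card = 2}

def v0 : Vtx := ⟨{0, 1}, by decide⟩

abbrev VV : Type := ↥{x : Vtx | x ≠ v0}

abbrev GG : SimpleGraph VV := petersen.induce {x : Vtx | x ≠ v0}

instance : DecidableRel GG.Adj := fun a b =>
  inferInstanceAs (Decidable (petersen.Adj a.1 b.1))

instance : DecidablePred (· ∈ {x : Vtx | x ≠ v0}) := fun x =>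
  inferInstanceAs (Decidable (x ≠ v0))

instance : Fintype VV := Subtype.fintype _

instance : Fintype GG.edgeSet := GG.fintypeEdgeSet

def w02 : VV := ⟨⟨({0,2} : Finset (Fin 5)), by decide⟩, by decide⟩
def w03 : VV := ⟨⟨({0,3} : Finset (Fin 5)), by decide⟩, by decide⟩
def w04 : VV := ⟨⟨({0,4} : Finset (Fin 5)), by decide⟩, by decide⟩
def w12 : VV := ⟨⟨({1,2} : Finset (Fin 5)), by decide⟩, by decide⟩
def w13 : VV := ⟨⟨({1,3} : Finset (Fin 5)), by decide⟩, by decide⟩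
def w14 : VV := ⟨⟨({1,4} : Finset (Fin 5)), by decide⟩, by decide⟩
def w23 : VV := ⟨⟨({2,3} : Finset (Fin 5)), by decide⟩, by decide⟩
def w24 : VV := ⟨⟨({2,4} : Finset (Fin 5)), by decide⟩, by decide⟩
def w34 : VV := ⟨⟨({3,4} : Finset (Fin 5)), by decide⟩, by decide⟩

def e0213 : GG.edgeSet := ⟨s(w02, w13), (SimpleGraph.mem_edgeSet _).2 (by decide)⟩
def e0214 : GG.edgeSet := ⟨s(w02, w14), (SimpleGraph.mem_edgeSet _).2 (by decide)⟩
def e0234 : GG.edgeSet := ⟨s(w02, w34), (SimpleGraph.mem_edgeSet _).2 (by decide)⟩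
def e0312 : GG.edgeSet := ⟨s(w03, w12), (SimpleGraph.mem_edgeSet _).2 (by decide)⟩
def e0314 : GG.edgeSet := ⟨s(w03, w14), (SimpleGraph.mem_edgeSet _).2 (by decide)⟩
def e0324 : GG.edgeSet := ⟨s(w03, w24), (SimpleGraph.mem_edgeSet _).2 (by decide)⟩
def e0412 : GG.edgeSet := ⟨s(w04, w12), (SimpleGraph.mem_edgeSet _).2 (by decide)⟩
def e0413 : GG.edgeSet := ⟨s(w04, w13), (SimpleGraph.mem_edgeSet _).2 (by decide)⟩
def e0423 : GG.edgeSet := ⟨s(w04, w23), (SimpleGraph.mem_edgeSet _).2 (by decide)⟩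
def e1234 : GG.edgeSet := ⟨s(w12, w34), (SimpleGraph.mem_edgeSet _).2 (by decide)⟩
def e1324 : GG.edgeSet := ⟨s(w13, w24), (SimpleGraph.mem_edgeSet _).2 (by decide)⟩
def e1423 : GG.edgeSet := ⟨s(w14, w23), (SimpleGraph.mem_edgeSet _).2 (by decide)⟩

def edgeList : List GG.edgeSet := [e0213, e0214, e0234, e0312, e0314, e0324, e0412, e0413, e0423, e1234, e1324, e1423]
def f4 : GG.edgeSet → Fin 4 := fun e =>
  if e = e0213 then 0 else if e = e0214 then 1 else if e = e0234 then 2 else if e = e0312 then 0 else if e = e0314 then 2 else if e = e0324 then 1 else if e = e0412 then 1 else if e = e0413 then 2 else if e = e0423 then 0 else if e = e1234 then 3 else if e = e1324 then 3 else if e = e1423 then 3 else 0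

/-- Generic pruning backtracking search for proper 3-colorings of a list of items. -/
def searchC {α : Type} (adj : α → α → Bool) : List α → List (α × Fin 3) → Bool
  | [], _ => true
  | e :: es, acc =>
    ([0, 1, 2] : List (Fin 3)).any fun k =>
      acc.all (fun c => !adj e c.1 || decide (c.2 ≠ k)) && searchC adj es ((e, k) :: acc)

lemma searchC_complete {α : Type} (adj : α → α → Bool) (f : α → Fin 3)
    (hf : ∀ a b, adj a b = true → f a ≠ f b) :
    ∀ (es : List α) (acc : List (α × Fin 3)),
      (∀ c ∈ acc, c.2 = f c.1) → searchC adj es acc = true := by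
  intro es
  induction es with
  | nil => intro acc _; rfl
  | cons e es ih =>
    intro acc hacc
    simp only [searchC, List.any_eq_true]
    refine ⟨f e, (by decide : ∀ k : Fin 3, k ∈ ([0, 1, 2] : List (Fin 3))) (f e), ?_⟩
    rw [Bool.and_eq_true]
    refine ⟨?_, ih _ ?_⟩
    · rw [List.all_eq_true]
      intro c hc
      cases h : adj e c.1 with
      | false => simp
      | true =>
        have := hf e c.1 h
        simp [hacc c hc, Ne.symm this]
    · rintro c hc
      rcases List.mem_cons.1 hc with rfl | hc
      · rfl
      · exact hacc c hc

def adjB : GG.edgeSet → GG.edgeSet → Bool := fun e f =>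
  decide (e ≠ f ∧ ∃ v, v ∈ (e : Sym2 VV) ∧ v ∈ (f : Sym2 VV))

lemma search_false : searchC adjB edgeList [] = false := by decide

lemma not_colorable_three : ¬ GG.lineGraph.Colorable 3 := by
  rintro ⟨C⟩
  have hf : ∀ a b : GG.edgeSet, adjB a b = true → C a ≠ C b := by
    intro a b hab
    have h := of_decide_eq_true hab
    exact C.valid (SimpleGraph.lineGraph_adj_iff_exists.2 h)
  have := searchC_complete adjB C hf edgeList [] (by simp)
  rw [search_false] at this
  exact Bool.false_ne_true this

lemma colorable_four : GG.lineGraph.Colorable 4 := by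
  refine ⟨SimpleGraph.Coloring.mk f4 ?_⟩
  intro a b hab
  rw [SimpleGraph.lineGraph_adj_iff_exists] at hab
  exact (by decide :
    ∀ a b : GG.edgeSet, (a ≠ b ∧ ∃ v, v ∈ (a : Sym2 VV) ∧ v ∈ (b : Sym2 VV)) → f4 a ≠ f4 b)
    a b hab

/-- The Petersen graph with one vertex deleted has chromatic index 4. -/
theorem stmt17 :
    ((petersen.induce
        {x | x ≠ (⟨{0, 1}, by decide⟩ : {s : Finset (Fin 5) // s.card = 2})})).chromaticIndex
      = 4 := by
  have h4 : GG.lineGraph.chromaticNumber ≤ (4 : ℕ) :=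
    SimpleGraph.chromaticNumber_le_iff_colorable.2 colorable_four
  have h3 : ¬ GG.lineGraph.chromaticNumber ≤ (3 : ℕ) := fun h =>
    not_colorable_three (SimpleGraph.chromaticNumber_le_iff_colorable.1 h)
  have : GG.lineGraph.chromaticNumber = 4 := by
    refine le_antisymm (by exact_mod_cast h4) ?_
    by_contra hlt
    push_neg at hlt
    exact h3 (by exact_mod_cast Order.le_of_lt_add_one (by exact_mod_cast hlt))
  exact this
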